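/- Let D be a positive integer with D ≡ 1 (mod 4), set ϖ := (1−D)/4 ∈ ℤ and Q(u,v) := u² + u·v + ϖ·v². Let x, y be integers with x ≥ 2, y ≥ 1 and Q(x, y) = 1; set g₁ := gcd(x+1, y), g₂ := gcd(x−1, y), P₁ := (2x+y+2)/g₁², P₂ := (2x+y−2)/g₂², and assume P₁ and P₂ are distinct primes (so that D = P₁·P₂ is squarefree). Let M, N be integers, not both zero, with gcd(Q(M,N), D) = 1, and set g := gcd(M, N), M₁ := M/g, N₁ := N/g. Define a₁ := N₁, b₁ := −(M₁+N₁); a₂ := 2M₁+N₁, b₂ := −(M₁+N₁) + 2ϖ·N₁; a₃ := (M₁·y − N₁·(1+x))/g₁, b₃ := (N₁·ϖ·y + (M₁+N₁)·(1+x))/g₁; a₄ := (N₁·(1−x) + M₁·y)/g₂, b₄ := (N₁·ϖ·y + (M₁+N₁)·(x−1))/g₂. Then gcd(a_j, b_j) = 1 for each j = 1, 2, 3, 4. -/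

import Mathlib

private lemma aux_gcd (varpi D M N u w c : ℤ)
    (hMN : IsCoprime M N) (huw : IsCoprime u w)
    (hPp : Prime (u ^ 2 + u * w + varpi * w ^ 2))
    (hPc : (u ^ 2 + u * w + varpi * w ^ 2) * c = D * w ^ 2)
    (hQD : IsCoprime (M ^ 2 + M * N + varpi * N ^ 2) D) :
    Int.gcd (w * M - u * N) (u * M + (varpi * w + u) * N) = 1 := by
  set P : ℤ := u ^ 2 + u * w + varpi * w ^ 2 with hPdef
  set a : ℤ := w * M - u * N with ha
  set b : ℤ := u * M + (varpi * w + u) * N with hb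
  have hda : (Int.gcd a b : ℤ) ∣ a := Int.gcd_dvd_left a b
  have hdb : (Int.gcd a b : ℤ) ∣ b := Int.gcd_dvd_right a b
  have h1 : (Int.gcd a b : ℤ) ∣ P * M := by
    have h : P * M = (varpi * w + u) * a + u * b := by rw [ha, hb, hPdef]; ring
    rw [h]; exact dvd_add (hda.mul_left _) (hdb.mul_left _)
  have h2 : (Int.gcd a b : ℤ) ∣ P * N := by
    have h : P * N = (-u) * a + w * b := by rw [ha, hb, hPdef]; ring
    rw [h]; exact dvd_add (hda.mul_left _) (hdb.mul_left _)
  have hdP : (Int.gcd a b : ℤ) ∣ P := by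
    obtain ⟨α, β, hαβ⟩ := hMN
    have h : P = α * (P * M) + β * (P * N) := by linear_combination (-P) * hαβ
    rw [h]; exact dvd_add (h1.mul_left _) (h2.mul_left _)
  have hdvdnat : Int.gcd a b ∣ P.natAbs := by
    have := Int.natAbs_dvd_natAbs.mpr hdP
    simpa using this
  have hnp : Nat.Prime P.natAbs := Int.prime_iff_natAbs_prime.mp hPp
  rcases hnp.eq_one_or_self_of_dvd _ hdvdnat with h | h
  · exact h
  · exfalso
    have hPa : P ∣ a := by
      have h' : ((P.natAbs : ℤ)) ∣ a := by rw [← h]; exact hda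
      exact Int.natAbs_dvd.mp h'
    have hPw : ¬ P ∣ w := by
      intro hw2
      have hu2 : P ∣ u := by
        have hsq : P ∣ u ^ 2 := by
          have huu : u ^ 2 = P - w * (u + varpi * w) := by rw [hPdef]; ring
          rw [huu]; exact dvd_sub dvd_rfl (hw2.mul_right _)
        exact hPp.dvd_of_dvd_pow hsq
      exact hPp.not_unit (huw.isUnit_of_dvd' hu2 hw2)
    have hPQ : P ∣ M ^ 2 + M * N + varpi * N ^ 2 := by
      have hw2 : P ∣ w ^ 2 * (M ^ 2 + M * N + varpi * N ^ 2) := by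
        have hid : w ^ 2 * (M ^ 2 + M * N + varpi * N ^ 2)
            = a * (w * M + u * N + w * N) + N ^ 2 * P := by rw [ha, hPdef]; ring
        rw [hid]; exact dvd_add (hPa.mul_right _) (dvd_mul_left _ _)
      rcases hPp.dvd_mul.mp hw2 with h' | h'
      · exact absurd (hPp.dvd_of_dvd_pow h') hPw
      · exact h'
    have hPD : P ∣ D := by
      have hdv : P ∣ D * w ^ 2 := ⟨c, hPc.symm⟩
      rcases hPp.dvd_mul.mp hdv with h' | h'
      · exact h'
      · exact absurd (hPp.dvd_of_dvd_pow h') hPw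
    obtain ⟨α, β, hαβ⟩ := hQD
    have hone : P ∣ 1 := by
      rw [← hαβ]; exact dvd_add (hPQ.mul_left _) (hPD.mul_left _)
    exact hPp.not_unit (isUnit_of_dvd_one hone)

/-- Coprimality assertion of Lemma `lem:diagterms`: if `gcd(Q(M,N), D) = 1`
then `gcd(a_j, b_j) = 1` for `j = 1, 2, 3, 4`. -/
theorem diagterms_coprimality
    (D : ℤ) (hD : 0 < D) (hD4 : D % 4 = 1)
    (varpi : ℤ) (hv : 4 * varpi = 1 - D)
    (Q : ℤ → ℤ → ℤ) (hQ : ∀ u v, Q u v = u ^ 2 + u * v + varpi * v ^ 2)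
    (x y : ℤ) (hx : 2 ≤ x) (hy : 1 ≤ y) (hunit : Q x y = 1)
    (g₁ g₂ P₁ P₂ : ℤ)
    (hg₁ : g₁ = Int.gcd (x + 1) y) (hg₂ : g₂ = Int.gcd (x - 1) y)
    (hP₁ : P₁ = (2 * x + y + 2) / g₁ ^ 2) (hP₂ : P₂ = (2 * x + y - 2) / g₂ ^ 2)
    (hP₁p : Prime P₁) (hP₂p : Prime P₂) (hPne : P₁ ≠ P₂)
    (M N : ℤ) (hMN : ¬(M = 0 ∧ N = 0)) (hcop : Int.gcd (Q M N) D = 1)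
    (g M₁ N₁ : ℤ) (hg : g = Int.gcd M N)
    (hM₁ : M₁ = M / g) (hN₁ : N₁ = N / g) :
    Int.gcd N₁ (-(M₁ + N₁)) = 1 ∧
    Int.gcd (2 * M₁ + N₁) (-(M₁ + N₁) + 2 * varpi * N₁) = 1 ∧
    Int.gcd ((M₁ * y - N₁ * (1 + x)) / g₁)
      ((N₁ * varpi * y + (M₁ + N₁) * (1 + x)) / g₁) = 1 ∧
    Int.gcd ((N₁ * (1 - x) + M₁ * y) / g₂)
      ((N₁ * varpi * y + (M₁ + N₁) * (x - 1)) / g₂) = 1 := by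
  -- basic setup
  have hgcdpos : 0 < Int.gcd M N :=
    Nat.pos_of_ne_zero (fun h0 => hMN (Int.gcd_eq_zero_iff.mp h0))
  have hg0 : g ≠ 0 := by rw [hg]; exact_mod_cast hgcdpos.ne'
  have hdM : g ∣ M := hg ▸ Int.gcd_dvd_left M N
  have hdN : g ∣ N := hg ▸ Int.gcd_dvd_right M N
  have hMg : M = g * M₁ := by rw [hM₁]; exact (Int.mul_ediv_cancel' hdM).symm
  have hNg : N = g * N₁ := by rw [hN₁]; exact (Int.mul_ediv_cancel' hdN).symm
  have hcop1 : IsCoprime M₁ N₁ := by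
    rw [Int.isCoprime_iff_gcd_eq_one, hM₁, hN₁, hg]
    exact Int.gcd_div_gcd_div_gcd hgcdpos
  rw [hQ] at hunit
  have hq : x ^ 2 + x * y + varpi * y ^ 2 = 1 := hunit
  have hQ1D : IsCoprime (M₁ ^ 2 + M₁ * N₁ + varpi * N₁ ^ 2) D := by
    have hfac : Q M N = g ^ 2 * (M₁ ^ 2 + M₁ * N₁ + varpi * N₁ ^ 2) := by
      rw [hQ, hMg, hNg]; ring
    have hcc := Int.isCoprime_iff_gcd_eq_one.mpr hcop
    rw [hfac] at hcc
    exact IsCoprime.of_mul_left_right hcc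
  -- j = 1
  have goal1 : Int.gcd N₁ (-(M₁ + N₁)) = 1 := by
    have h1 : IsCoprime N₁ (-M₁ + N₁ * (-1)) := (hcop1.symm.neg_right).add_mul_left_right (-1)
    have h2 : -(M₁ + N₁) = -M₁ + N₁ * (-1) := by ring
    rw [h2]; exact Int.isCoprime_iff_gcd_eq_one.mp h1
  -- j = 2
  have goal2 : Int.gcd (2 * M₁ + N₁) (-(M₁ + N₁) + 2 * varpi * N₁) = 1 := by
    set a : ℤ := 2 * M₁ + N₁ with ha
    set b : ℤ := -(M₁ + N₁) + 2 * varpi * N₁ with hb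
    have hda : (Int.gcd a b : ℤ) ∣ a := Int.gcd_dvd_left a b
    have hdb : (Int.gcd a b : ℤ) ∣ b := Int.gcd_dvd_right a b
    have h1 : (Int.gcd a b : ℤ) ∣ D * M₁ := by
      have h : D * M₁ = (1 - 2 * varpi) * a + b := by
        rw [ha, hb]; linear_combination M₁ * hv
      rw [h]; exact dvd_add (hda.mul_left _) hdb
    have h2 : (Int.gcd a b : ℤ) ∣ D * N₁ := by
      have h : D * N₁ = (-1) * a + (-2) * b := by
        rw [ha, hb]; linear_combination N₁ * hv
      rw [h]; exact dvd_add (hda.mul_left _) (hdb.mul_left _)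
    have hdD : (Int.gcd a b : ℤ) ∣ D := by
      obtain ⟨α, β, hαβ⟩ := hcop1
      have h : D = α * (D * M₁) + β * (D * N₁) := by linear_combination (-D) * hαβ
      rw [h]; exact dvd_add (h1.mul_left _) (h2.mul_left _)
    have h4Q : (Int.gcd a b : ℤ) ∣ 4 * (M₁ ^ 2 + M₁ * N₁ + varpi * N₁ ^ 2) := by
      have h : 4 * (M₁ ^ 2 + M₁ * N₁ + varpi * N₁ ^ 2) = a * a - (D * N₁) * N₁ := by
        rw [ha]; linear_combination N₁ ^ 2 * hv
      rw [h]; exact dvd_sub (hda.mul_right _) (h2.mul_right _)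
    have hDodd : ¬ (2 : ℤ) ∣ D := by
      rintro ⟨k, hk⟩; omega
    have hd2 : ¬ (2 : ℤ) ∣ (Int.gcd a b : ℤ) := fun h => hDodd (h.trans hdD)
    have hcop2 : IsCoprime ((Int.gcd a b : ℤ)) 2 := by
      rcases Int.even_or_odd (Int.gcd a b : ℤ) with he | ho
      · exact absurd he.two_dvd hd2
      · obtain ⟨k, hk⟩ := ho
        exact ⟨1, -k, by linarith⟩
    have hcop4 : IsCoprime ((Int.gcd a b : ℤ)) 4 := by
      have h4 : (4 : ℤ) = 2 * 2 := by norm_num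
      rw [h4]; exact hcop2.mul_right hcop2
    have hQd : (Int.gcd a b : ℤ) ∣ (M₁ ^ 2 + M₁ * N₁ + varpi * N₁ ^ 2) :=
      hcop4.dvd_of_dvd_mul_left h4Q
    obtain ⟨α, β, hαβ⟩ := hQ1D
    have hone : (Int.gcd a b : ℤ) ∣ 1 := by
      rw [← hαβ]; exact dvd_add (hQd.mul_left _) (hdD.mul_left _)
    have : Int.gcd a b ∣ 1 := by exact_mod_cast hone
    exact Nat.dvd_one.mp this
  -- common for j = 3, 4
  have hy0 : y ≠ 0 := by omega
  have hst : (2 * x + y + 2) * (2 * x + y - 2) = D * y ^ 2 := by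
    linear_combination 4 * hq - y ^ 2 * hv
  -- j = 3
  have goal3 : Int.gcd ((M₁ * y - N₁ * (1 + x)) / g₁)
      ((N₁ * varpi * y + (M₁ + N₁) * (1 + x)) / g₁) = 1 := by
    have hg₁pos : 0 < Int.gcd (x + 1) y :=
      Nat.pos_of_ne_zero (fun h => hy0 (Int.gcd_eq_zero_iff.mp h).2)
    have hg₁0 : g₁ ≠ 0 := by rw [hg₁]; exact_mod_cast hg₁pos.ne'
    have hdu : g₁ ∣ x + 1 := hg₁ ▸ Int.gcd_dvd_left (x + 1) y
    have hdw : g₁ ∣ y := hg₁ ▸ Int.gcd_dvd_right (x + 1) y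
    obtain ⟨u, hu⟩ := hdu
    obtain ⟨w, hw⟩ := hdw
    have hu' : (x + 1) / g₁ = u := by rw [hu]; exact Int.mul_ediv_cancel_left u hg₁0
    have hw' : y / g₁ = w := by rw [hw]; exact Int.mul_ediv_cancel_left w hg₁0
    have huw : IsCoprime u w := by
      rw [Int.isCoprime_iff_gcd_eq_one, ← hu', ← hw', hg₁]
      exact Int.gcd_div_gcd_div_gcd hg₁pos
    have hs : 2 * x + y + 2 = g₁ ^ 2 * (u ^ 2 + u * w + varpi * w ^ 2) := by
      linear_combination (-1) * hq + (x + 1 + g₁ * u + y) * hu + (g₁ * u + varpi * (y + g₁ * w)) * hw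
    have hP₁v : P₁ = u ^ 2 + u * w + varpi * w ^ 2 := by
      rw [hP₁, hs]; exact Int.mul_ediv_cancel_left _ (pow_ne_zero 2 hg₁0)
    have hPc : (u ^ 2 + u * w + varpi * w ^ 2) * (2 * x + y - 2) = D * w ^ 2 := by
      have hcan : g₁ ^ 2 * ((u ^ 2 + u * w + varpi * w ^ 2) * (2 * x + y - 2))
          = g₁ ^ 2 * (D * w ^ 2) := by
        calc g₁ ^ 2 * ((u ^ 2 + u * w + varpi * w ^ 2) * (2 * x + y - 2))
            = (2 * x + y + 2) * (2 * x + y - 2) := by rw [hs]; ring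
          _ = D * y ^ 2 := hst
          _ = g₁ ^ 2 * (D * w ^ 2) := by rw [hw]; ring
      exact mul_left_cancel₀ (pow_ne_zero 2 hg₁0) hcan
    have hP₁p' : Prime (u ^ 2 + u * w + varpi * w ^ 2) := hP₁v ▸ hP₁p
    have ha₃ : (M₁ * y - N₁ * (1 + x)) / g₁ = w * M₁ - u * N₁ := by
      have h : M₁ * y - N₁ * (1 + x) = g₁ * (w * M₁ - u * N₁) := by
        linear_combination M₁ * hw - N₁ * hu
      rw [h, Int.mul_ediv_cancel_left _ hg₁0]
    have hb₃ : (N₁ * varpi * y + (M₁ + N₁) * (1 + x)) / g₁ = u * M₁ + (varpi * w + u) * N₁ := by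
      have h : N₁ * varpi * y + (M₁ + N₁) * (1 + x) = g₁ * (u * M₁ + (varpi * w + u) * N₁) := by
        linear_combination N₁ * varpi * hw + (M₁ + N₁) * hu
      rw [h, Int.mul_ediv_cancel_left _ hg₁0]
    rw [ha₃, hb₃]
    exact aux_gcd varpi D M₁ N₁ u w (2 * x + y - 2) hcop1 huw hP₁p' hPc hQ1D
  -- j = 4
  have goal4 : Int.gcd ((N₁ * (1 - x) + M₁ * y) / g₂)
      ((N₁ * varpi * y + (M₁ + N₁) * (x - 1)) / g₂) = 1 := by
    have hg₂pos : 0 < Int.gcd (x - 1) y :=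
      Nat.pos_of_ne_zero (fun h => hy0 (Int.gcd_eq_zero_iff.mp h).2)
    have hg₂0 : g₂ ≠ 0 := by rw [hg₂]; exact_mod_cast hg₂pos.ne'
    have hdu : g₂ ∣ x - 1 := hg₂ ▸ Int.gcd_dvd_left (x - 1) y
    have hdw : g₂ ∣ y := hg₂ ▸ Int.gcd_dvd_right (x - 1) y
    obtain ⟨u, hu⟩ := hdu
    obtain ⟨w, hw⟩ := hdw
    have hu' : (x - 1) / g₂ = u := by rw [hu]; exact Int.mul_ediv_cancel_left u hg₂0
    have hw' : y / g₂ = w := by rw [hw]; exact Int.mul_ediv_cancel_left w hg₂0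
    have huw : IsCoprime u w := by
      rw [Int.isCoprime_iff_gcd_eq_one, ← hu', ← hw', hg₂]
      exact Int.gcd_div_gcd_div_gcd hg₂pos
    have hs₂ : 2 * x + y - 2 = g₂ ^ 2 * (-(u ^ 2 + u * w + varpi * w ^ 2)) := by
      linear_combination hq - (x - 1 + g₂ * u + y) * hu - (g₂ * u + varpi * (y + g₂ * w)) * hw
    have hP₂v : P₂ = -(u ^ 2 + u * w + varpi * w ^ 2) := by
      rw [hP₂, hs₂]; exact Int.mul_ediv_cancel_left _ (pow_ne_zero 2 hg₂0)
    have hQv₂ : u ^ 2 + u * w + varpi * w ^ 2 = -P₂ := by linarith [hP₂v]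
    have hP₂p' : Prime (u ^ 2 + u * w + varpi * w ^ 2) := by rw [hQv₂]; exact hP₂p.neg
    have hPc : (u ^ 2 + u * w + varpi * w ^ 2) * (-(2 * x + y + 2)) = D * w ^ 2 := by
      have hcan : g₂ ^ 2 * ((u ^ 2 + u * w + varpi * w ^ 2) * (-(2 * x + y + 2)))
          = g₂ ^ 2 * (D * w ^ 2) := by
        calc g₂ ^ 2 * ((u ^ 2 + u * w + varpi * w ^ 2) * (-(2 * x + y + 2)))
            = (2 * x + y + 2) * (g₂ ^ 2 * (-(u ^ 2 + u * w + varpi * w ^ 2))) := by ring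
          _ = (2 * x + y + 2) * (2 * x + y - 2) := by rw [← hs₂]
          _ = D * y ^ 2 := hst
          _ = g₂ ^ 2 * (D * w ^ 2) := by rw [hw]; ring
      exact mul_left_cancel₀ (pow_ne_zero 2 hg₂0) hcan
    have ha₄ : (N₁ * (1 - x) + M₁ * y) / g₂ = w * M₁ - u * N₁ := by
      have h : N₁ * (1 - x) + M₁ * y = g₂ * (w * M₁ - u * N₁) := by
        linear_combination M₁ * hw - N₁ * hu
      rw [h, Int.mul_ediv_cancel_left _ hg₂0]
    have hb₄ : (N₁ * varpi * y + (M₁ + N₁) * (x - 1)) / g₂ = u * M₁ + (varpi * w + u) * N₁ := by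
      have h : N₁ * varpi * y + (M₁ + N₁) * (x - 1) = g₂ * (u * M₁ + (varpi * w + u) * N₁) := by
        linear_combination N₁ * varpi * hw + (M₁ + N₁) * hu
      rw [h, Int.mul_ediv_cancel_left _ hg₂0]
    rw [ha₄, hb₄]
    exact aux_gcd varpi D M₁ N₁ u w (-(2 * x + y + 2)) hcop1 huw hP₂p' hPc hQ1D
  exact ⟨goal1, goal2, goal3, goal4⟩
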